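/- For every z in the complex upper half-plane, the Cauchy–Stieltjes transform of the free 1/2-stable law at time 1 satisfies ∫_{1/4}^∞ (√(4x-1)/(2πx²)) · 1/(z-x) dx = (√(1-4z) - 1 + 2z)/(2z²), where √ denotes the standard branch of the square root. -/

import Mathlib

set_option maxHeartbeats 1000000

open MeasureTheory Filter Set

private lemma sqrt41_tendsto : Tendsto (fun x : ℝ => Real.sqrt (4*x-1)) atTop atTop := by
  have h : Tendsto Real.sqrt atTop atTop := by
    refine tendsto_atTop_atTop.2 fun b => ⟨(max b 0)^2, fun a ha => ?_⟩
    calc b ≤ max b 0 := le_max_left _ _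
      _ = Real.sqrt ((max b 0)^2) := (Real.sqrt_sq (le_max_right _ _)).symm
      _ ≤ Real.sqrt a := Real.sqrt_le_sqrt ha
  have h2 : Tendsto (fun x : ℝ => 4*x-1) atTop atTop :=
    tendsto_atTop_atTop.2 fun b => ⟨(b+1)/4, fun a ha => by linarith⟩
  exact h.comp h2

private lemma rat_tendsto : Tendsto (fun u : ℝ => u/(1+u^2)) atTop (nhds 0) := by
  refine tendsto_of_tendsto_of_tendsto_of_le_of_le' tendsto_const_nhds
    tendsto_inv_atTop_zero ?_ ?_
  · filter_upwards [eventually_ge_atTop (1:ℝ)] with u hu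
    positivity
  · filter_upwards [eventually_ge_atTop (1:ℝ)] with u hu
    have hu0 : (0:ℝ) < u := lt_of_lt_of_le one_pos hu
    rw [div_le_iff₀ (by positivity), inv_mul_eq_div, le_div_iff₀ hu0]
    nlinarith [sq_nonneg u]


private lemma stieltjes_alg (s T p z x : ℂ) (hT : T ≠ 0) (hp : p ≠ 0) (hz : z ≠ 0) (hx : x ≠ 0)
    (h1T : 1+T^2 ≠ 0) (hst : s^2+T^2 ≠ 0) (hzx : z - x ≠ 0)
    (hs2 : s^2 = 1-4*z) (hxT : T^2 = 4*x-1) :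
    (2*z-1)/(p*z^2) * (1/(1+T^2) * (2/T)) - 2/(p*z) * ((1-T^2)/(1+T^2)^2 * (2/T))
      - (-1) * (s/(2*p*z^2) * (2/T) * (2*s/(s^2+T^2)))
    = T/(2*p*x^2) * (z-x)⁻¹ := by
  have hD1 : p * z ^ 2 * ((1 + T ^ 2) * T) * (p * z * ((1 + T ^ 2) ^ 2 * T)) ≠ 0 :=
    mul_ne_zero (mul_ne_zero (mul_ne_zero hp (pow_ne_zero 2 hz)) (mul_ne_zero h1T hT))
      (mul_ne_zero (mul_ne_zero hp hz) (mul_ne_zero (pow_ne_zero 2 h1T) hT))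
  have hD2 : 2 * p * z ^ 2 * T * (s ^ 2 + T ^ 2) ≠ 0 :=
    mul_ne_zero (mul_ne_zero (mul_ne_zero (mul_ne_zero two_ne_zero hp) (pow_ne_zero 2 hz)) hT) hst
  have hx' : x = (1+T^2)/4 := by linear_combination -hxT/4
  have hz' : z = (1-s^2)/4 := by linear_combination hs2/4
  have h1s : 1 - s^2 ≠ 0 := by
    intro h; apply hz; rw [hz', h]; ring
  have hzx' : z - x = -(s^2+T^2)/4 := by rw [hz', hx']; ring
  rw [hzx', hz', hx']
  field_simp
  ring

private lemma aux_deriv (x : ℝ) (hx : 1/4 < x) :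
    HasDerivAt (fun y : ℝ => Real.sqrt (4*y-1)) (2/Real.sqrt (4*x-1)) x ∧
    HasDerivAt (fun y : ℝ => Real.arctan (Real.sqrt (4*y-1)))
      (1/(1+(Real.sqrt (4*x-1))^2) * (2/Real.sqrt (4*x-1))) x ∧
    HasDerivAt (fun y : ℝ => Real.sqrt (4*y-1)/(1+(Real.sqrt (4*y-1))^2))
      ((1-(Real.sqrt (4*x-1))^2)/(1+(Real.sqrt (4*x-1))^2)^2 * (2/Real.sqrt (4*x-1))) x := by
  have h4x : (0:ℝ) < 4*x-1 := by linarith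
  set T : ℝ := Real.sqrt (4*x-1) with hT
  have ht0 : 0 < T := Real.sqrt_pos.2 h4x
  have hlin : HasDerivAt (fun y : ℝ => 4*y-1) 4 x := by
    simpa using ((hasDerivAt_id x).const_mul (4:ℝ)).sub_const 1
  have hsq : HasDerivAt (fun y : ℝ => Real.sqrt (4*y-1)) (2/T) x := by
    have h := (Real.hasDerivAt_sqrt (ne_of_gt h4x)).comp x hlin
    refine h.congr_deriv ?_
    rw [← hT]
    ring
  have harc0 := (Real.hasDerivAt_arctan T).comp x hsq
  refine ⟨hsq, harc0, ?_⟩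
  have hq : HasDerivAt (fun u : ℝ => u/(1+u^2)) ((1-T^2)/(1+T^2)^2) T := by
    have h1 : HasDerivAt (fun u : ℝ => 1+u^2) (2*T) T := by
      simpa using (hasDerivAt_pow 2 T).const_add 1
    have h2 := (hasDerivAt_id' (x := T)).div h1 (by positivity)
    exact h2.congr_deriv (by ring)
  exact hq.comp x hsq

private theorem key (z s : ℂ) (hz : 0 < z.im) (hs2 : s^2 = 1 - 4*z) (hsre : 0 < s.re) :
    (∫ x in Set.Ioi (1/4 : ℝ),
        ((Real.sqrt (4*x - 1) / (2*Real.pi*x^2) : ℝ) : ℂ) * (z - (x:ℂ))⁻¹)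
      = (s - 1 + 2*z) / (2*z^2) := by
  have hzne : z ≠ 0 := by intro h; rw [h] at hz; simp at hz
  have hπ : (Real.pi : ℝ) ≠ 0 := Real.pi_ne_zero
  have hπc : (Real.pi : ℂ) ≠ 0 := Complex.ofReal_ne_zero.2 hπ
  have hsne : s ≠ 0 := by intro h; rw [h] at hsre; simp at hsre
  have hreP : ∀ r : ℝ, (s + Complex.I*(r:ℂ)).re = s.re := by intro r; simp
  have hreM : ∀ r : ℝ, (s - Complex.I*(r:ℂ)).re = s.re := by intro r; simp
  have hslitP : ∀ r : ℝ, (s + Complex.I*(r:ℂ)) ∈ Complex.slitPlane :=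
    fun r => Or.inl (by rw [hreP]; exact hsre)
  have hslitM : ∀ r : ℝ, (s - Complex.I*(r:ℂ)) ∈ Complex.slitPlane :=
    fun r => Or.inl (by rw [hreM]; exact hsre)
  have hneP : ∀ r : ℝ, s + Complex.I*(r:ℂ) ≠ 0 :=
    fun r => Complex.slitPlane_ne_zero (hslitP r)
  have hneM : ∀ r : ℝ, s - Complex.I*(r:ℂ) ≠ 0 :=
    fun r => Complex.slitPlane_ne_zero (hslitM r)
  have hzc : z = (1 - s^2)/4 := by linear_combination hs2/4
  set c₁ : ℂ := (2*z-1)/((Real.pi:ℂ)*z^2) with hc₁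
  set c₂ : ℂ := 2/((Real.pi:ℂ)*z) with hc₂
  set c₃ : ℂ := Complex.I*s/(2*(Real.pi:ℂ)*z^2) with hc₃
  set F : ℝ → ℂ := fun x =>
      c₁ * ((Real.arctan (Real.sqrt (4*x-1)) : ℝ) : ℂ)
      - c₂ * ((Real.sqrt (4*x-1) / (1 + (Real.sqrt (4*x-1))^2) : ℝ) : ℂ)
      - c₃ * (Complex.log (s + Complex.I*((Real.sqrt (4*x-1) : ℝ) : ℂ))
              - Complex.log (s - Complex.I*((Real.sqrt (4*x-1) : ℝ) : ℂ))) with hF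
  -- derivative
  have hasF : ∀ x ∈ Ioi (1/4 : ℝ), HasDerivAt F
      (((Real.sqrt (4*x - 1) / (2*Real.pi*x^2) : ℝ) : ℂ) * (z - (x:ℂ))⁻¹) x := by
    intro x hx
    rw [mem_Ioi] at hx
    have h4x : (0:ℝ) < 4*x-1 := by linarith
    obtain ⟨hsq, harc, hrat⟩ := aux_deriv x hx
    set T : ℝ := Real.sqrt (4*x-1) with hT
    have ht0 : 0 < T := Real.sqrt_pos.2 h4x
    have ht2 : T^2 = 4*x-1 := Real.sq_sqrt h4x.le
    have hofT : HasDerivAt (fun y : ℝ => ((Real.sqrt (4*y-1) : ℝ) : ℂ)) ((2/T : ℝ) : ℂ) x :=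
      hsq.ofReal_comp
    have hinP : HasDerivAt (fun y : ℝ => s + Complex.I*((Real.sqrt (4*y-1) : ℝ) : ℂ))
        (Complex.I*((2/T : ℝ) : ℂ)) x := (hofT.const_mul Complex.I).const_add s
    have hinM : HasDerivAt (fun y : ℝ => s - Complex.I*((Real.sqrt (4*y-1) : ℝ) : ℂ))
        (-(Complex.I*((2/T : ℝ) : ℂ))) x := (hofT.const_mul Complex.I).const_sub s
    have hlogP : HasDerivAt (fun y : ℝ => Complex.log (s + Complex.I*((Real.sqrt (4*y-1) : ℝ) : ℂ)))
        ((Complex.I*((2/T : ℝ) : ℂ)) • (s + Complex.I*((T:ℝ):ℂ))⁻¹) x :=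
      by have h := (Complex.hasDerivAt_log (hslitP T)).scomp x hinP; exact h
    have hlogM : HasDerivAt (fun y : ℝ => Complex.log (s - Complex.I*((Real.sqrt (4*y-1) : ℝ) : ℂ)))
        ((-(Complex.I*((2/T : ℝ) : ℂ))) • (s - Complex.I*((T:ℝ):ℂ))⁻¹) x :=
      by have h := (Complex.hasDerivAt_log (hslitM T)).scomp x hinM; exact h
    have hD : HasDerivAt F
        (c₁ * ((1/(1+T^2) * (2/T) : ℝ) : ℂ)
         - c₂ * (((1-T^2)/(1+T^2)^2 * (2/T) : ℝ) : ℂ)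
         - c₃ * ((Complex.I*((2/T : ℝ) : ℂ)) • (s + Complex.I*((T:ℝ):ℂ))⁻¹
                 - (-(Complex.I*((2/T : ℝ) : ℂ))) • (s - Complex.I*((T:ℝ):ℂ))⁻¹)) x :=
      ((harc.ofReal_comp.const_mul c₁).sub (hrat.ofReal_comp.const_mul c₂)).sub
        ((hlogP.sub hlogM).const_mul c₃)
    have hTc : ((T:ℝ):ℂ) ≠ 0 := Complex.ofReal_ne_zero.2 (ne_of_gt ht0)
    have h1T : ((1:ℂ) + ((T:ℝ):ℂ)^2) ≠ 0 := by
      have h' : ((1 + T^2 : ℝ) : ℂ) ≠ 0 := Complex.ofReal_ne_zero.2 (by positivity)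
      push_cast at h'
      exact h'
    have hzx : z - (x:ℂ) ≠ 0 := by
      intro h
      have h2 : (z - (x:ℂ)).im = 0 := by rw [h]; simp
      simp [Complex.sub_im] at h2
      linarith
    have hxr : x = (1+T^2)/4 := by rw [ht2]; ring
    have hxc : ((x:ℝ):ℂ) = (1 + ((T:ℝ):ℂ)^2)/4 := by rw [hxr]; push_cast; ring
    have hs1 : (1:ℂ) - s^2 ≠ 0 := by
      intro h
      apply hzne
      rw [hzc, h]
      norm_num
    have hst : s^2 + ((T:ℝ):ℂ)^2 ≠ 0 := by
      intro h
      apply hzx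
      rw [hzc, hxc]
      linear_combination -h/4
    have hsp := hneP T
    have hsm := hneM T
    have hfac : (s + Complex.I*((T:ℝ):ℂ)) * (s - Complex.I*((T:ℝ):ℂ)) = s^2 + ((T:ℝ):ℂ)^2 := by
      linear_combination -((T:ℝ):ℂ)^2 * Complex.I_sq
    have hsum : (s + Complex.I*((T:ℝ):ℂ))⁻¹ + (s - Complex.I*((T:ℝ):ℂ))⁻¹
        = 2*s/(s^2 + ((T:ℝ):ℂ)^2) := by
      rw [inv_add_inv hsp hsm, hfac]
      congr 1
      ring
    have hEq : (c₁ * ((1/(1+T^2) * (2/T) : ℝ) : ℂ)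
         - c₂ * (((1-T^2)/(1+T^2)^2 * (2/T) : ℝ) : ℂ)
         - c₃ * ((Complex.I*((2/T : ℝ) : ℂ)) • (s + Complex.I*((T:ℝ):ℂ))⁻¹
                 - (-(Complex.I*((2/T : ℝ) : ℂ))) • (s - Complex.I*((T:ℝ):ℂ))⁻¹))
        = ((Real.sqrt (4*x - 1) / (2*Real.pi*x^2) : ℝ) : ℂ) * (z - (x:ℂ))⁻¹ := by
      rw [smul_eq_mul, smul_eq_mul]
      have hcollect : (Complex.I*((2/T : ℝ) : ℂ)) * (s + Complex.I*((T:ℝ):ℂ))⁻¹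
          - (-(Complex.I*((2/T : ℝ) : ℂ))) * (s - Complex.I*((T:ℝ):ℂ))⁻¹
          = Complex.I * ((2/T : ℝ) : ℂ) * (2*s/(s^2 + ((T:ℝ):ℂ)^2)) := by
        rw [← hsum]; ring
      rw [hcollect]
      have hII : c₃ * (Complex.I * ((2/T : ℝ) : ℂ) * (2*s/(s^2 + ((T:ℝ):ℂ)^2)))
          = (Complex.I*Complex.I) * (s/(2*(Real.pi:ℂ)*z^2) * (((2/T : ℝ) : ℂ))
              * (2*s/(s^2 + ((T:ℝ):ℂ)^2))) := by
        rw [hc₃]; ring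
      rw [hII, Complex.I_mul_I]
      rw [hc₁, hc₂]
      push_cast
      have hxne : ((x:ℝ):ℂ) ≠ 0 := Complex.ofReal_ne_zero.2 (by linarith)
      have hT2c : ((T:ℝ):ℂ)^2 = 4*((x:ℝ):ℂ) - 1 := by exact_mod_cast congrArg Complex.ofReal ht2
      linear_combination stieltjes_alg s (↑T) (↑Real.pi) z (↑x) hTc hπc hzne hxne h1T hst hzx hs2 hT2c
    exact hEq ▸ hD
  -- continuity
  have hcontT : Continuous (fun x : ℝ => Real.sqrt (4*x-1)) :=
    Real.continuous_sqrt.comp ((continuous_const.mul continuous_id).sub continuous_const)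
  have hcontTc : Continuous (fun x : ℝ => ((Real.sqrt (4*x-1) : ℝ) : ℂ)) :=
    Complex.continuous_ofReal.comp hcontT
  have hcontF : Continuous F := by
    refine ((continuous_const.mul (Complex.continuous_ofReal.comp
        (Real.continuous_arctan.comp hcontT))).sub
      (continuous_const.mul (Complex.continuous_ofReal.comp
        (hcontT.div (continuous_const.add (hcontT.pow 2))
          (fun x => (by positivity : (0:ℝ) < 1 + Real.sqrt (4*x-1)^2).ne'))))).sub
      (continuous_const.mul (Continuous.sub
        ((continuous_const.add (continuous_const.mul hcontTc)).clog (fun x => hslitP _))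
        ((continuous_const.sub (continuous_const.mul hcontTc)).clog (fun x => hslitM _))))
  -- value at 1/4
  have hs40 : Real.sqrt (4*(1/4:ℝ)-1) = 0 := by norm_num
  have hF14 : F (1/4) = 0 := by
    rw [hF]
    simp only [hs40]
    simp [Real.arctan_zero]
  -- limit at infinity
  have harcl : Tendsto (fun x : ℝ => ((Real.arctan (Real.sqrt (4*x-1)) : ℝ) : ℂ)) atTop
      (nhds ((Real.pi/2 : ℝ) : ℂ)) :=
    (Complex.continuous_ofReal.tendsto _).comp
      ((Real.tendsto_arctan_atTop.mono_right nhdsWithin_le_nhds).comp sqrt41_tendsto)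
  have hratl : Tendsto (fun x : ℝ => ((Real.sqrt (4*x-1) / (1 + (Real.sqrt (4*x-1))^2) : ℝ) : ℂ))
      atTop (nhds 0) := by
    have := (Complex.continuous_ofReal.tendsto _).comp (rat_tendsto.comp sqrt41_tendsto)
    simpa [Function.comp_def] using this
  have hinv0 : Tendsto (fun x : ℝ => (((Real.sqrt (4*x-1))⁻¹ : ℝ) : ℂ)) atTop (nhds 0) := by
    have := (Complex.continuous_ofReal.tendsto _).comp (tendsto_inv_atTop_zero.comp sqrt41_tendsto)
    simpa [Function.comp_def] using this
  have hPl : Tendsto (fun x : ℝ => s * (((Real.sqrt (4*x-1))⁻¹ : ℝ) : ℂ) + Complex.I) atTop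
      (nhds Complex.I) := by
    have := (hinv0.const_mul s).add_const Complex.I
    simpa using this
  have hMl : Tendsto (fun x : ℝ => s * (((Real.sqrt (4*x-1))⁻¹ : ℝ) : ℂ) - Complex.I) atTop
      (nhds (-Complex.I)) := by
    have := (hinv0.const_mul s).sub_const Complex.I
    simpa using this
  have hIslit : Complex.I ∈ Complex.slitPlane := Or.inr (by simp)
  have hnIslit : -Complex.I ∈ Complex.slitPlane := Or.inr (by simp)
  have hlogPl : Tendsto (fun x : ℝ => Complex.log (s * (((Real.sqrt (4*x-1))⁻¹ : ℝ) : ℂ) + Complex.I))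
      atTop (nhds (Complex.log Complex.I)) :=
    (continuousAt_clog hIslit).tendsto.comp hPl
  have hlogMl : Tendsto (fun x : ℝ => Complex.log (s * (((Real.sqrt (4*x-1))⁻¹ : ℝ) : ℂ) - Complex.I))
      atTop (nhds (Complex.log (-Complex.I))) :=
    (continuousAt_clog hnIslit).tendsto.comp hMl
  have hlogl : Tendsto (fun x : ℝ =>
      Complex.log (s + Complex.I*((Real.sqrt (4*x-1) : ℝ) : ℂ))
        - Complex.log (s - Complex.I*((Real.sqrt (4*x-1) : ℝ) : ℂ))) atTop
      (nhds ((Real.pi : ℂ) * Complex.I)) := by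
    have hval : Complex.log Complex.I - Complex.log (-Complex.I) = (Real.pi : ℂ) * Complex.I := by
      rw [Complex.log_I, Complex.log_neg_I]; ring
    have hlim := hlogPl.sub hlogMl
    rw [hval] at hlim
    refine hlim.congr' ?_
    filter_upwards [sqrt41_tendsto.eventually (eventually_gt_atTop (0:ℝ))] with x hx
    set r : ℝ := Real.sqrt (4*x-1) with hr
    have hrc : ((r:ℝ):ℂ) ≠ 0 := Complex.ofReal_ne_zero.2 (ne_of_gt hx)
    have n1 : s * ((r⁻¹ : ℝ) : ℂ) + Complex.I ≠ 0 := by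
      have hre : (s * ((r⁻¹ : ℝ) : ℂ) + Complex.I).re = s.re * r⁻¹ := by
        simp [Complex.add_re, Complex.mul_re]
      intro h
      have h0 : s.re * r⁻¹ = 0 := by rw [← hre, h]; simp
      have hpos : 0 < s.re * r⁻¹ := by positivity
      exact absurd h0 (ne_of_gt hpos)
    have n2 : s * ((r⁻¹ : ℝ) : ℂ) - Complex.I ≠ 0 := by
      have hre : (s * ((r⁻¹ : ℝ) : ℂ) - Complex.I).re = s.re * r⁻¹ := by
        simp [Complex.sub_re, Complex.mul_re]
      intro h
      have h0 : s.re * r⁻¹ = 0 := by rw [← hre, h]; simp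
      have hpos : 0 < s.re * r⁻¹ := by positivity
      exact absurd h0 (ne_of_gt hpos)
    have e1 : s + Complex.I*((r:ℝ):ℂ) = ((r:ℝ):ℂ) * (s * ((r⁻¹ : ℝ) : ℂ) + Complex.I) := by
      push_cast
      field_simp
    have e2 : s - Complex.I*((r:ℝ):ℂ) = ((r:ℝ):ℂ) * (s * ((r⁻¹ : ℝ) : ℂ) - Complex.I) := by
      push_cast
      field_simp
    rw [e1, e2, Complex.log_ofReal_mul hx n1, Complex.log_ofReal_mul hx n2]
    ring
  have hFl : Tendsto F atTop
      (nhds (c₁ * ((Real.pi/2 : ℝ) : ℂ) - c₂ * 0 - c₃ * ((Real.pi : ℂ) * Complex.I))) :=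
    ((harcl.const_mul c₁).sub (hratl.const_mul c₂)).sub (hlogl.const_mul c₃)
  have hM : c₁ * ((Real.pi/2 : ℝ) : ℂ) - c₂ * 0 - c₃ * ((Real.pi : ℂ) * Complex.I)
      = (s - 1 + 2*z) / (2*z^2) := by
    have h3 : c₃ * ((Real.pi : ℂ) * Complex.I)
        = (Complex.I*Complex.I) * (s*(Real.pi : ℂ)/(2*(Real.pi:ℂ)*z^2)) := by
      rw [hc₃]; ring
    rw [h3, Complex.I_mul_I, hc₁, hc₂]
    push_cast
    field_simp [hπc, hzne]
    ring
  -- integrability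
  have hGderiv : ∀ x ∈ Ioi (1/4 : ℝ), HasDerivAt
      (fun x : ℝ => 4*Real.arctan (Real.sqrt (4*x-1))
        - 4*(Real.sqrt (4*x-1)/(1+(Real.sqrt (4*x-1))^2)))
      (Real.sqrt (4*x-1)/x^2) x := by
    intro x hx
    rw [mem_Ioi] at hx
    have h4x : (0:ℝ) < 4*x-1 := by linarith
    obtain ⟨hsq, harc, hrat⟩ := aux_deriv x hx
    have hD := (harc.const_mul (4:ℝ)).sub (hrat.const_mul (4:ℝ))
    refine hD.congr_deriv ?_
    set T : ℝ := Real.sqrt (4*x-1) with hT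
    have ht0 : 0 < T := Real.sqrt_pos.2 h4x
    have ht2 : T^2 = 4*x-1 := Real.sq_sqrt h4x.le
    have hxr : x = (1+T^2)/4 := by rw [ht2]; ring
    rw [hxr]
    have h1T : (0:ℝ) < 1+T^2 := by positivity
    field_simp
    ring
  have hGcont : ContinuousWithinAt
      (fun x : ℝ => 4*Real.arctan (Real.sqrt (4*x-1))
        - 4*(Real.sqrt (4*x-1)/(1+(Real.sqrt (4*x-1))^2))) (Ici (1/4 : ℝ)) (1/4 : ℝ) := by
    apply Continuous.continuousWithinAt
    exact (continuous_const.mul (Real.continuous_arctan.comp hcontT)).sub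
      (continuous_const.mul (hcontT.div (continuous_const.add (hcontT.pow 2)) (fun x => by positivity)))
  have hGtend : Tendsto
      (fun x : ℝ => 4*Real.arctan (Real.sqrt (4*x-1))
        - 4*(Real.sqrt (4*x-1)/(1+(Real.sqrt (4*x-1))^2))) atTop (nhds (2*Real.pi)) := by
    have h1 : Tendsto (fun x : ℝ => 4*Real.arctan (Real.sqrt (4*x-1))) atTop
        (nhds (4*(Real.pi/2))) :=
      ((Real.tendsto_arctan_atTop.mono_right nhdsWithin_le_nhds).comp sqrt41_tendsto).const_mul 4
    have h2 : Tendsto (fun x : ℝ => 4*(Real.sqrt (4*x-1)/(1+(Real.sqrt (4*x-1))^2))) atTop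
        (nhds (4*0)) := (rat_tendsto.comp sqrt41_tendsto).const_mul 4
    have := h1.sub h2
    norm_num at this
    convert this using 2
    ring
  have hIntDen : IntegrableOn (fun x : ℝ => Real.sqrt (4*x-1)/x^2) (Ioi (1/4 : ℝ)) :=
    integrableOn_Ioi_deriv_of_nonneg hGcont hGderiv
      (fun x hx => by
        rw [mem_Ioi] at hx
        have : (0:ℝ) < x := by linarith
        positivity) hGtend
  have hcontInt : ContinuousOn (fun x : ℝ =>
      ((Real.sqrt (4*x - 1) / (2*Real.pi*x^2) : ℝ) : ℂ) * (z - (x:ℂ))⁻¹) (Ioi (1/4 : ℝ)) := by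
    have hzx : ∀ x : ℝ, z - (x:ℂ) ≠ 0 := by
      intro x h
      have h2 : (z - (x:ℂ)).im = 0 := by rw [h]; simp
      simp [Complex.sub_im] at h2
      linarith
    refine ContinuousOn.mul ?_ (Continuous.continuousOn ?_)
    · refine Complex.continuous_ofReal.comp_continuousOn ?_
      refine ContinuousOn.div hcontT.continuousOn (continuous_const.mul (continuous_pow 2)).continuousOn ?_
      intro x hx
      rw [mem_Ioi] at hx
      have : (0:ℝ) < x := by linarith
      positivity
    · exact Continuous.inv₀ (continuous_const.sub Complex.continuous_ofReal) hzx
  have hbound : ∀ᵐ x ∂(volume.restrict (Ioi (1/4 : ℝ))),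
      ‖((Real.sqrt (4*x - 1) / (2*Real.pi*x^2) : ℝ) : ℂ) * (z - (x:ℂ))⁻¹‖
        ≤ (2*Real.pi*z.im)⁻¹ * (Real.sqrt (4*x-1)/x^2) := by
    filter_upwards [ae_restrict_mem measurableSet_Ioi] with x hx
    rw [mem_Ioi] at hx
    have hx0 : (0:ℝ) < x := by linarith
    have h4x : (0:ℝ) ≤ 4*x-1 := by linarith
    have hle : z.im ≤ ‖z - (x:ℂ)‖ := by
      have h1 : |(z - (x:ℂ)).im| ≤ ‖z - (x:ℂ)‖ := Complex.abs_im_le_norm _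
      have h2 : (z - (x:ℂ)).im = z.im := by simp [Complex.sub_im]
      rw [h2] at h1
      calc z.im ≤ |z.im| := le_abs_self _
        _ ≤ ‖z - (x:ℂ)‖ := h1
    rw [norm_mul, norm_inv, Complex.norm_real, Real.norm_eq_abs]
    have hnn : (0:ℝ) ≤ Real.sqrt (4*x-1) / (2*Real.pi*x^2) := by positivity
    rw [abs_of_nonneg hnn]
    have hinv : ‖z - (x:ℂ)‖⁻¹ ≤ (z.im)⁻¹ := by
      apply inv_anti₀ hz hle
    calc Real.sqrt (4*x - 1) / (2*Real.pi*x^2) * ‖z - (x:ℂ)‖⁻¹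
        ≤ Real.sqrt (4*x - 1) / (2*Real.pi*x^2) * (z.im)⁻¹ := by
          apply mul_le_mul_of_nonneg_left hinv (by positivity)
      _ = (2*Real.pi*z.im)⁻¹ * (Real.sqrt (4*x-1)/x^2) := by
          rw [div_mul_eq_mul_div, div_eq_iff (by positivity : (2*Real.pi*x^2 : ℝ) ≠ 0)]
          field_simp [hπ, ne_of_gt hz, ne_of_gt hx0]
  have hInt : IntegrableOn (fun x : ℝ =>
      ((Real.sqrt (4*x - 1) / (2*Real.pi*x^2) : ℝ) : ℂ) * (z - (x:ℂ))⁻¹) (Ioi (1/4 : ℝ)) := by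
    refine Integrable.mono' (hIntDen.const_mul ((2*Real.pi*z.im)⁻¹)) ?_ hbound
    exact hcontInt.aestronglyMeasurable measurableSet_Ioi
  calc (∫ x in Set.Ioi (1/4 : ℝ),
        ((Real.sqrt (4*x - 1) / (2*Real.pi*x^2) : ℝ) : ℂ) * (z - (x:ℂ))⁻¹)
      = (c₁ * ((Real.pi/2 : ℝ) : ℂ) - c₂ * 0 - c₃ * ((Real.pi : ℂ) * Complex.I)) - F (1/4) :=
        integral_Ioi_of_hasDerivAt_of_tendsto hcontF.continuousWithinAt hasF hInt hFl
    _ = (s - 1 + 2*z) / (2*z^2) := by rw [hF14, sub_zero]; exact hM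

theorem stmt10 (z : ℂ) (hz : 0 < z.im) :
    (∫ x in Set.Ioi (1/4 : ℝ),
        ((Real.sqrt (4*x - 1) / (2*Real.pi*x^2) : ℝ) : ℂ) * (z - (x:ℂ))⁻¹)
      = ((1 - 4*z) ^ ((1:ℂ)/2) - 1 + 2*z) / (2*z^2) := by
  set s : ℂ := (1 - 4*z) ^ ((1:ℂ)/2) with hs
  have hs2 : s^2 = 1 - 4*z := by
    rw [hs, show ((1:ℂ)/2) = (((2:ℕ)):ℂ)⁻¹ by norm_num]
    exact Complex.cpow_nat_inv_pow _ two_ne_zero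
  have hwim : (1 - 4*z).im < 0 := by simp [Complex.sub_im]; linarith
  have hwne : (1 - 4*z) ≠ 0 := by
    intro h
    have := congrArg Complex.im h
    simp at this
    linarith
  have hsre : 0 < s.re := by
    rw [hs, Complex.cpow_def_of_ne_zero hwne, Complex.exp_re]
    apply mul_pos (Real.exp_pos _)
    apply Real.cos_pos_of_mem_Ioo
    have him : (Complex.log (1 - 4*z) * ((1:ℂ)/2)).im = Complex.arg (1 - 4*z) / 2 := by
      simp [Complex.mul_im, Complex.log_im]
      ring
    rw [him]
    have h1 : Complex.arg (1 - 4*z) < 0 := Complex.arg_neg_iff.2 hwim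
    have h2 : -Real.pi < Complex.arg (1 - 4*z) := Complex.neg_pi_lt_arg _
    constructor <;> [linarith [Real.pi_pos]; linarith [Real.pi_pos]]
  exact key z s hz hs2 hsre
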